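/- arXiv:1112.5571 — 2 statements merged into one kernel-verified Lean document; each statement's English description precedes it below -/
import Mathlib

section
/- For every pair of words u, v over the alphabet A = {0,1,…,d}, the expectation of the shuffle product is invariant under reversal: Ē(u⧢v) = Ē(|S|(u) ⧢ |S|(v)), where |S| denotes word reversal and Ē is extended linearly to K⟨A⟩. -/
open Finsupp

/-- Words over the alphabet `A = {0,1,…,d}`. -/
abbrev Word (d : ℕ) : Type := List (Fin (d+1))

/-- The free real vector space with basis the set of all words. -/
abbrev KA (d : ℕ) : Type := Word d →₀ ℝ

/-- Shuffle product of two words, as an element of `KA d`. -/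
noncomputable def shuffleWord (d : ℕ) : Word d → Word d → KA d
  | [], v => Finsupp.single v 1
  | a :: u, [] => Finsupp.single (a :: u) 1
  | a :: u, b :: v =>
      Finsupp.mapDomain (List.cons a) (shuffleWord d u (b :: v)) +
      Finsupp.mapDomain (List.cons b) (shuffleWord d (a :: u) v)
  termination_by u v => u.length + v.length

/-- Bilinear extension of the shuffle product to `KA d`. -/
noncomputable def sh (d : ℕ) (x y : KA d) : KA d :=
  x.sum fun u cu => y.sum fun v cv => (cu * cv) • shuffleWord d u v

/-- Admissible words: concatenations of blocks each of which is the single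
letter `0` or a pair `aa` with `a ≠ 0`. -/
inductive Admissible (d : ℕ) : Word d → Prop
  | nil : Admissible d []
  | zero {w : Word d} : Admissible d w → Admissible d (0 :: w)
  | pair {w : Word d} (a : Fin (d+1)) : a ≠ 0 → Admissible d w →
      Admissible d (a :: a :: w)

/-- Number of `0` letters. -/
def zc (d : ℕ) (w : Word d) : ℕ := w.count 0

/-- Half the number of nonzero letters. -/
def dc (d : ℕ) (w : Word d) : ℕ := (w.length - w.count 0) / 2

def nc (d : ℕ) (w : Word d) : ℕ := zc d w + dc d w

open Classical in
/-- The expectation map on words. -/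
noncomputable def Ebar (d : ℕ) (t : ℝ) (w : Word d) : ℝ :=
  if Admissible d w then t ^ nc d w / (2 ^ dc d w * Nat.factorial (nc d w)) else 0

/-- Linear extension of the expectation map to `KA d`. -/
noncomputable def EbarL (d : ℕ) (t : ℝ) (x : KA d) : ℝ :=
  x.sum fun w c => c * Ebar d t w

/-- The linear endomorphism of `KA d` determined by values on basis words. -/
noncomputable def wordLift (d : ℕ) (f : Word d → KA d) : KA d →ₗ[ℝ] KA d :=
  Finsupp.lsum ℝ fun w => LinearMap.toSpanSingleton ℝ (KA d) (f w)

/-- The identity endomorphism `id`. -/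
noncomputable def idE (d : ℕ) : KA d →ₗ[ℝ] KA d := LinearMap.id

/-- The reversal endomorphism `|S|`. -/
noncomputable def revE (d : ℕ) : KA d →ₗ[ℝ] KA d :=
  wordLift d fun w => Finsupp.single w.reverse 1

/-- The antipode `S`. -/
noncomputable def Sa (d : ℕ) : KA d →ₗ[ℝ] KA d :=
  wordLift d fun w => Finsupp.single w.reverse ((-1 : ℝ) ^ w.length)

/-- The convolution unit `ν`. -/
noncomputable def nuE (d : ℕ) : KA d →ₗ[ℝ] KA d :=
  wordLift d fun w => if w = [] then Finsupp.single ([] : Word d) 1 else 0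

/-- The expectation endomorphism `E`. -/
noncomputable def EE (d : ℕ) (t : ℝ) : KA d →ₗ[ℝ] KA d :=
  wordLift d fun w => Finsupp.single ([] : Word d) (Ebar d t w)

/-- The convolution product `X ⋆ Y`. -/
noncomputable def conv (d : ℕ) (X Y : KA d →ₗ[ℝ] KA d) : KA d →ₗ[ℝ] KA d :=
  wordLift d fun w => ∑ k ∈ Finset.range (w.length + 1),
    sh d (X (Finsupp.single (w.take k) 1)) (Y (Finsupp.single (w.drop k) 1))

/-- Convolution powers, `X^{⋆0} = ν`. -/
noncomputable def convPow (d : ℕ) (X : KA d →ₗ[ℝ] KA d) : ℕ → (KA d →ₗ[ℝ] KA d)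
  | 0 => nuE d
  | k + 1 => conv d X (convPow d X k)

/-- The inner product `⟨X,Y⟩` of endomorphisms, taken over the words of
length `n`, relative to the family of vectors `Vf`. -/
noncomputable def ip (d : ℕ) (t : ℝ) {H : Type*} [NormedAddCommGroup H]
    [InnerProductSpace ℝ H] (Vf : Word d → H) (n : ℕ)
    (X Y : KA d →ₗ[ℝ] KA d) : ℝ :=
  ∑ u : Fin n → Fin (d+1), ∑ v : Fin n → Fin (d+1),
    EbarL d t (sh d (X (Finsupp.single (List.ofFn u) 1))
                    (Y (Finsupp.single (List.ofFn v) 1))) *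
      (inner ℝ (Vf (List.ofFn u)) (Vf (List.ofFn v)) : ℝ)

/-- Positive semidefiniteness of the expectation Gram matrix at grade `n`:
indexed by the words of length `n` together with the empty word. -/
def gramPSD (d n : ℕ) (t : ℝ) : Prop :=
  ∀ c : Option (Fin n → Fin (d+1)) → ℝ,
    0 ≤ ∑ x : Option (Fin n → Fin (d+1)), ∑ y : Option (Fin n → Fin (d+1)),
      c x * c y *
        EbarL d t (shuffleWord d (x.elim ([] : Word d) List.ofFn)
                                 (y.elim ([] : Word d) List.ofFn))

lemma shuffle_nil_left (d : ℕ) (v : Word d) : shuffleWord d [] v = Finsupp.single v 1 := by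
  cases v <;> rw [shuffleWord]

lemma shuffle_nil_right (d : ℕ) (u : Word d) : shuffleWord d u [] = Finsupp.single u 1 := by
  cases u <;> rw [shuffleWord]

lemma shuffle_cons (d : ℕ) (a b : Fin (d+1)) (u v : Word d) :
    shuffleWord d (a :: u) (b :: v) =
      Finsupp.mapDomain (List.cons a) (shuffleWord d u (b :: v)) +
      Finsupp.mapDomain (List.cons b) (shuffleWord d (a :: u) v) := by
  rw [shuffleWord]

lemma mapDomain_mapDomain {α β γ M : Type*} [AddCommMonoid M] (f : α → β) (g : β → γ)
    (x : α →₀ M) : Finsupp.mapDomain g (Finsupp.mapDomain f x) = Finsupp.mapDomain (g ∘ f) x :=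
  (Finsupp.mapDomain_comp).symm

theorem shuffle_snoc (d : ℕ) (a b : Fin (d+1)) :
    (u v : Word d) → shuffleWord d (u ++ [a]) (v ++ [b]) =
      Finsupp.mapDomain (· ++ [a]) (shuffleWord d u (v ++ [b])) +
      Finsupp.mapDomain (· ++ [b]) (shuffleWord d (u ++ [a]) v)
  | [], [] => by
      simp only [List.nil_append]
      rw [shuffle_cons]
      simp only [shuffle_nil_left, shuffle_nil_right, Finsupp.mapDomain_single,
        List.cons_append, List.nil_append]
      abel
  | [], e :: v' => by
      have ih := shuffle_snoc d a b [] v'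
      simp only [List.nil_append, List.cons_append] at ih ⊢
      rw [shuffle_cons, ih, shuffle_cons]
      simp only [shuffle_nil_left, Finsupp.mapDomain_add, Finsupp.mapDomain_single,
        mapDomain_mapDomain, Function.comp_def, List.cons_append]
      abel
  | c :: u', [] => by
      have ih := shuffle_snoc d a b u' []
      simp only [List.nil_append, List.cons_append] at ih ⊢
      rw [shuffle_cons, ih, shuffle_cons]
      simp only [shuffle_nil_right, Finsupp.mapDomain_add, Finsupp.mapDomain_single,
        mapDomain_mapDomain, Function.comp_def, List.cons_append]
      abel
  | c :: u', e :: v' => by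
      have ih1 := shuffle_snoc d a b u' (e :: v')
      have ih2 := shuffle_snoc d a b (c :: u') v'
      simp only [List.cons_append] at ih1 ih2 ⊢
      rw [shuffle_cons, shuffle_cons, shuffle_cons, ih1, ih2]
      simp only [Finsupp.mapDomain_add, mapDomain_mapDomain, Function.comp_def,
        List.cons_append]
      abel
  termination_by u v => u.length + v.length

theorem shuffle_reverse (d : ℕ) :
    (u v : Word d) → Finsupp.mapDomain List.reverse (shuffleWord d u v) =
      shuffleWord d u.reverse v.reverse
  | [], v => by
      simp [shuffle_nil_left, Finsupp.mapDomain_single]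
  | a :: u, [] => by
      simp [shuffle_nil_right, Finsupp.mapDomain_single]
  | a :: u, b :: v => by
      have ih1 := shuffle_reverse d u (b :: v)
      have ih2 := shuffle_reverse d (a :: u) v
      have e1 : (List.reverse ∘ List.cons a : Word d → Word d)
          = (· ++ [a]) ∘ List.reverse := funext fun x => by simp
      have e2 : (List.reverse ∘ List.cons b : Word d → Word d)
          = (· ++ [b]) ∘ List.reverse := funext fun x => by simp
      rw [shuffle_cons, Finsupp.mapDomain_add, mapDomain_mapDomain, mapDomain_mapDomain,
        e1, e2, Finsupp.mapDomain_comp, Finsupp.mapDomain_comp, ih1, ih2]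
      simp only [List.reverse_cons]
      rw [← shuffle_snoc]
  termination_by u v => u.length + v.length

lemma Admissible.append {d : ℕ} {u v : Word d} (hu : Admissible d u)
    (hv : Admissible d v) : Admissible d (u ++ v) := by
  induction hu with
  | nil => exact hv
  | zero _ ih => exact .zero ih
  | pair a ha _ ih => exact .pair a ha ih

lemma Admissible.reverse {d : ℕ} {w : Word d} (h : Admissible d w) :
    Admissible d w.reverse := by
  induction h with
  | nil => exact .nil
  | zero _ ih =>
      rw [List.reverse_cons]
      exact ih.append (.zero .nil)
  | pair a ha _ ih =>
      rw [List.reverse_cons, List.reverse_cons, List.append_assoc]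
      exact ih.append (.pair a ha .nil)

lemma Ebar_reverse (d : ℕ) (t : ℝ) (w : Word d) : Ebar d t w.reverse = Ebar d t w := by
  have hA : Admissible d w.reverse ↔ Admissible d w :=
    ⟨fun h => by simpa using h.reverse, Admissible.reverse⟩
  simp only [Ebar, zc, dc, nc, List.count_reverse, List.length_reverse]
  classical
  rw [if_congr hA rfl rfl]

lemma EbarL_mapDomain_reverse (d : ℕ) (t : ℝ) (x : KA d) :
    EbarL d t (Finsupp.mapDomain List.reverse x) = EbarL d t x := by
  unfold EbarL
  rw [Finsupp.sum_mapDomain_index (fun w => by simp) (fun w m₁ m₂ => by ring)]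
  exact Finsupp.sum_congr fun w _ => by rw [Ebar_reverse]

theorem stmt_8 (d : ℕ) (hd : 1 ≤ d) (t : ℝ) (ht : 0 < t) (u v : Word d) :
    EbarL d t (shuffleWord d u v)
      = EbarL d t (shuffleWord d u.reverse v.reverse) := by
  rw [← shuffle_reverse, EbarL_mapDomain_reverse]
end

section
/- For every integer n ≥ 1, for every real inner product space and every family of vectors (V_w): ⟨|S|, J^{⋆n}⟩ = ⟨id, J^{⋆n}⟩, where J^{⋆n} is the n-fold convolution power of J = id − ν, |S| is the reversal endomorphism, and the inner product is taken over the words of length n (the grade equals the convolution power). -/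
open Finsupp

section Aux

variable {d : ℕ}

lemma shuffleWord_nil_left (v : Word d) : shuffleWord d [] v = Finsupp.single v 1 := by
  rw [shuffleWord]

lemma shuffleWord_nil_right (v : Word d) : shuffleWord d v [] = Finsupp.single v 1 := by
  cases v <;> rw [shuffleWord]

lemma shuffleWord_cons_cons (a b : Fin (d+1)) (u v : Word d) :
    shuffleWord d (a :: u) (b :: v) =
      Finsupp.mapDomain (List.cons a) (shuffleWord d u (b :: v)) +
      Finsupp.mapDomain (List.cons b) (shuffleWord d (a :: u) v) := by
  rw [shuffleWord]

lemma shuffleWord_concat (a b : Fin (d+1)) :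
    ∀ (N : ℕ) (u v : Word d), u.length + v.length ≤ N →
    shuffleWord d (u ++ [a]) (v ++ [b]) =
      Finsupp.mapDomain (· ++ [a]) (shuffleWord d u (v ++ [b])) +
      Finsupp.mapDomain (· ++ [b]) (shuffleWord d (u ++ [a]) v) := by
  intro N
  induction N with
  | zero =>
    rintro u v h
    obtain rfl : u = [] := by cases u <;> simp_all
    obtain rfl : v = [] := by cases v <;> simp_all
    simp only [List.nil_append]
    rw [shuffleWord_cons_cons, shuffleWord_nil_left, shuffleWord_nil_right]
    simp only [Finsupp.mapDomain_single, List.cons_append, List.nil_append]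
    exact add_comm _ _
  | succ N ih =>
    rintro u v h
    match u, v with
    | [], [] =>
      simp only [List.nil_append]
      rw [shuffleWord_cons_cons, shuffleWord_nil_left, shuffleWord_nil_right]
      simp only [Finsupp.mapDomain_single, List.cons_append, List.nil_append]
      exact add_comm _ _
    | [], c :: v' =>
      have h1 := ih [] v' (by simp at h ⊢; omega)
      simp only [List.nil_append, List.cons_append] at h1 ⊢
      rw [shuffleWord_cons_cons, h1, shuffleWord_cons_cons a c [] v']
      simp only [shuffleWord_nil_left, shuffleWord_nil_right, Finsupp.mapDomain_add,
        Finsupp.mapDomain_single, ← Finsupp.mapDomain_comp, Function.comp_def,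
        List.cons_append, List.nil_append, List.append_assoc, List.singleton_append]
      abel
    | c :: u', [] =>
      have h1 := ih u' [] (by simp at h ⊢; omega)
      simp only [List.nil_append, List.cons_append] at h1 ⊢
      rw [shuffleWord_cons_cons, h1, shuffleWord_cons_cons c b u' []]
      simp only [shuffleWord_nil_left, shuffleWord_nil_right, Finsupp.mapDomain_add,
        Finsupp.mapDomain_single, ← Finsupp.mapDomain_comp, Function.comp_def,
        List.cons_append, List.nil_append, List.append_assoc, List.singleton_append]
      abel
    | c :: u', e :: v' =>
      have h1 := ih u' (e :: v') (by simp at h ⊢; omega)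
      have h2 := ih (c :: u') v' (by simp at h ⊢; omega)
      simp only [List.cons_append] at h1 h2 ⊢
      rw [shuffleWord_cons_cons, h1, h2,
        shuffleWord_cons_cons c e u' (v' ++ [b]),
        shuffleWord_cons_cons c e (u' ++ [a]) v']
      simp only [shuffleWord_nil_left, shuffleWord_nil_right, Finsupp.mapDomain_add,
        Finsupp.mapDomain_single, ← Finsupp.mapDomain_comp, Function.comp_def,
        List.cons_append, List.nil_append, List.append_assoc, List.singleton_append]
      abel

lemma shuffleWord_rev_aux :
    ∀ (N : ℕ) (u v : Word d), u.length + v.length ≤ N →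
    Finsupp.mapDomain List.reverse (shuffleWord d u v)
      = shuffleWord d u.reverse v.reverse := by
  intro N
  induction N with
  | zero =>
    rintro u v h
    obtain rfl : u = [] := by cases u <;> simp_all
    obtain rfl : v = [] := by cases v <;> simp_all
    simp [shuffleWord_nil_left, Finsupp.mapDomain_single]
  | succ N ih =>
    rintro u v h
    match u, v with
    | [], v =>
      rw [shuffleWord_nil_left, List.reverse_nil, shuffleWord_nil_left]
      simp [Finsupp.mapDomain_single]
    | c :: u', [] =>
      rw [shuffleWord_nil_right, List.reverse_nil, shuffleWord_nil_right]
      simp [Finsupp.mapDomain_single]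
    | a :: u', b :: v' =>
      have h1 := ih u' (b :: v') (by simp at h ⊢; omega)
      have h2 := ih (a :: u') v' (by simp at h ⊢; omega)
      rw [shuffleWord_cons_cons]
      rw [Finsupp.mapDomain_add, ← Finsupp.mapDomain_comp, ← Finsupp.mapDomain_comp]
      have e1 : (List.reverse ∘ List.cons a : Word d → Word d)
          = (· ++ [a]) ∘ List.reverse := by
        funext l; simp
      have e2 : (List.reverse ∘ List.cons b : Word d → Word d)
          = (· ++ [b]) ∘ List.reverse := by
        funext l; simp
      rw [e1, e2, Finsupp.mapDomain_comp, Finsupp.mapDomain_comp, h1, h2,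
        List.reverse_cons, List.reverse_cons,
        shuffleWord_concat a b (u'.reverse.length + v'.reverse.length) _ _ le_rfl,
        ← List.reverse_cons, ← List.reverse_cons]

lemma shuffleWord_rev (u v : Word d) :
    Finsupp.mapDomain List.reverse (shuffleWord d u v)
      = shuffleWord d u.reverse v.reverse :=
  shuffleWord_rev_aux (u.length + v.length) u v le_rfl

lemma sh_single_left (w : Word d) (y : KA d) :
    sh d (Finsupp.single w 1) y = y.sum fun v cv => cv • shuffleWord d w v := by
  unfold sh
  rw [Finsupp.sum_single_index]
  · simp
  · simp

lemma sh_zero_left (y : KA d) : sh d 0 y = 0 := by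
  unfold sh; simp

lemma sh_zero_right (x : KA d) : sh d x 0 = 0 := by
  unfold sh; simp

lemma mapRev_sh_single (w : Word d) (y : KA d) :
    Finsupp.mapDomain List.reverse (sh d (Finsupp.single w 1) y)
      = sh d (Finsupp.single w.reverse 1) (Finsupp.mapDomain List.reverse y) := by
  rw [sh_single_left, sh_single_left, Finsupp.mapDomain_sum,
    Finsupp.sum_mapDomain_index (by simp) (by intros; rw [add_smul])]
  exact Finsupp.sum_congr fun v _ => by
    rw [Finsupp.mapDomain_smul, shuffleWord_rev]

/-- Iterated shuffle of the single letters of a word. -/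
noncomputable def msh (d : ℕ) : Word d → KA d
  | [] => Finsupp.single [] 1
  | a :: l => sh d (Finsupp.single [a] 1) (msh d l)

lemma mapRev_msh (l : Word d) :
    Finsupp.mapDomain List.reverse (msh d l) = msh d l := by
  induction l with
  | nil => simp [msh, Finsupp.mapDomain_single]
  | cons a l ih => rw [msh, mapRev_sh_single, ih]; rfl

lemma wordLift_single (f : Word d → KA d) (w : Word d) :
    wordLift d f (Finsupp.single w 1) = f w := by
  unfold wordLift
  rw [Finsupp.lsum_single, LinearMap.toSpanSingleton_apply, one_smul]

lemma J_nil : (idE d - nuE d) (Finsupp.single ([] : Word d) 1) = 0 := by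
  rw [LinearMap.sub_apply, idE, nuE, wordLift_single]
  simp

lemma J_single_ne (w : Word d) (h : w ≠ []) :
    (idE d - nuE d) (Finsupp.single w 1) = Finsupp.single w 1 := by
  rw [LinearMap.sub_apply, idE, nuE, wordLift_single]
  simp [h]

lemma convPow_short :
    ∀ (k : ℕ) (w : Word d), w.length < k →
    convPow d (idE d - nuE d) k (Finsupp.single w 1) = 0 := by
  intro k
  induction k with
  | zero => intro w h; omega
  | succ k ih =>
    intro w h
    rw [convPow, conv, wordLift_single]
    apply Finset.sum_eq_zero
    intro j hj
    rcases Nat.eq_zero_or_pos j with h0 | h1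
    · subst h0
      rw [List.take_zero, J_nil, sh_zero_left]
    · have hlen : (w.drop j).length < k := by
        rw [List.length_drop]
        simp only [Finset.mem_range] at hj
        omega
      rw [ih _ hlen, sh_zero_right]

lemma convPow_exact :
    ∀ (k : ℕ) (w : Word d), w.length = k →
    convPow d (idE d - nuE d) k (Finsupp.single w 1) = msh d w := by
  intro k
  induction k with
  | zero =>
    intro w h
    obtain rfl : w = [] := List.length_eq_zero_iff.mp h
    rw [convPow, nuE, wordLift_single]
    simp [msh]
  | succ k ih =>
    intro w h
    obtain ⟨a, w', rfl⟩ : ∃ a w', w = a :: w' := by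
      cases w with
      | nil => simp at h
      | cons a w' => exact ⟨a, w', rfl⟩
    rw [convPow, conv, wordLift_single]
    rw [Finset.sum_eq_single 1]
    · have ht : (a :: w').take 1 = [a] := rfl
      have hd2 : (a :: w').drop 1 = w' := rfl
      rw [ht, hd2, J_single_ne _ (by simp), ih w' (by simpa using h), msh]
    · intro j hj hne
      rcases Nat.eq_zero_or_pos j with h0 | h1
      · subst h0
        rw [List.take_zero, J_nil, sh_zero_left]
      · have hlen : (((a :: w').drop j)).length < k := by
          rw [List.length_drop]
          simp only [Finset.mem_range, List.length_cons] at hj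
          simp only [List.length_cons] at h ⊢
          omega
        rw [convPow_short k _ hlen, sh_zero_right]
    · intro h1
      exfalso
      apply h1
      simp [Finset.mem_range]

lemma Admissible.append_zero {w : Word d} (h : Admissible d w) :
    Admissible d (w ++ [0]) := by
  induction h with
  | nil => exact Admissible.zero Admissible.nil
  | zero _ ih => exact Admissible.zero ih
  | pair a ha _ ih => exact Admissible.pair a ha ih

lemma Admissible.append_pair {w : Word d} (a : Fin (d+1)) (ha : a ≠ 0)
    (h : Admissible d w) : Admissible d (w ++ [a, a]) := by
  induction h with
  | nil => exact Admissible.pair a ha Admissible.nil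
  | zero _ ih => exact Admissible.zero ih
  | pair b hb _ ih => exact Admissible.pair b hb ih

lemma Admissible.rev {w : Word d} (h : Admissible d w) :
    Admissible d w.reverse := by
  induction h with
  | nil => exact Admissible.nil
  | zero _ ih => rw [List.reverse_cons]; exact ih.append_zero
  | pair a ha _ ih =>
    rw [List.reverse_cons, List.reverse_cons, List.append_assoc]
    exact ih.append_pair a ha

lemma admissible_reverse_iff (w : Word d) :
    Admissible d w.reverse ↔ Admissible d w :=
  ⟨fun h => by simpa using h.rev, fun h => h.rev⟩

lemma Ebar_rev (t : ℝ) (w : Word d) : Ebar d t w.reverse = Ebar d t w := by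
  unfold Ebar nc dc zc
  rw [List.count_reverse, List.length_reverse]
  congr 1
  simp [admissible_reverse_iff]

lemma EbarL_mapRev (t : ℝ) (x : KA d) :
    EbarL d t (Finsupp.mapDomain List.reverse x) = EbarL d t x := by
  unfold EbarL
  rw [Finsupp.sum_mapDomain_index (by simp) (by intros; rw [add_mul])]
  exact Finsupp.sum_congr fun w _ => by rw [Ebar_rev]

end Aux

theorem stmt_16 (d n : ℕ) (hd : 1 ≤ d) (hn : 1 ≤ n) (t : ℝ) (ht : 0 < t)
    {H : Type*} [NormedAddCommGroup H] [InnerProductSpace ℝ H]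
    (Vf : Word d → H) :
    ip d t Vf n (revE d) (convPow d (idE d - nuE d) n)
      = ip d t Vf n (idE d) (convPow d (idE d - nuE d) n) := by
  unfold ip
  refine Finset.sum_congr rfl fun u _ => Finset.sum_congr rfl fun v _ => ?_
  congr 1
  have hrev : revE d (Finsupp.single (List.ofFn u) 1)
      = Finsupp.single (List.ofFn u).reverse 1 := by
    rw [revE, wordLift_single]
  have hid : idE d (Finsupp.single (List.ofFn u) 1)
      = Finsupp.single (List.ofFn u) 1 := rfl
  rw [hrev, hid, convPow_exact n (List.ofFn v) (by simp)]
  rw [← EbarL_mapRev t (sh d (Finsupp.single (List.ofFn u).reverse 1)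
      (msh d (List.ofFn v))), mapRev_sh_single, List.reverse_reverse, mapRev_msh]
end
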